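/- Let β be a real m×r matrix of full column rank r. Then there exists a unique pair (Λ, G) where G is an r×r orthogonal matrix and Λ = β G is an ordered GLT matrix; equivalently, β = Λ Gᵀ. The matrix Λ is called the GLT representation of β. -/

import Mathlib

open Matrix Submodule Module Finset InnerProductSpace
open scoped RealInnerProductSpace

set_option maxHeartbeats 1000000


/-- `Λ` is an ordered GLT matrix with pivot rows `l 0 < ... < l (r-1)`. -/
def IsOrderedGLTWithPivots {m r : ℕ} (Λ : Matrix (Fin m) (Fin r) ℝ) (l : Fin r → Fin m) : Prop :=
  Λ.rank = r ∧ StrictMono l ∧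
    ∀ j : Fin r, (∀ i : Fin m, i < l j → Λ i j = 0) ∧ 0 < Λ (l j) j

/-- `Λ` is an ordered GLT matrix. -/
def IsOrderedGLT {m r : ℕ} (Λ : Matrix (Fin m) (Fin r) ℝ) : Prop :=
  ∃ l : Fin r → Fin m, IsOrderedGLTWithPivots Λ l

lemma inner_zero_of_span {E : Type*} [NormedAddCommGroup E] [InnerProductSpace ℝ E]
    {s : Set E} {v : E} (h : ∀ y ∈ s, ⟪y, v⟫ = 0) {x : E}
    (hx : x ∈ span ℝ s) : ⟪x, v⟫ = 0 := by
  have hle : span ℝ s ≤ LinearMap.ker (innerSL ℝ v : E →ₗ[ℝ] ℝ) := by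
    rw [Submodule.span_le]
    intro y hy
    simpa [real_inner_comm] using h y hy
  simpa [real_inner_comm x v] using hle hx

lemma inner_self_gramSchmidt {E : Type*} [NormedAddCommGroup E] [InnerProductSpace ℝ E]
    {ι : Type*} [LinearOrder ι] [LocallyFiniteOrderBot ι] [WellFoundedLT ι] (f : ι → E) (i : ι) :
    ⟪f i, gramSchmidt ℝ f i⟫ = ‖gramSchmidt ℝ f i‖^2 := by
  have hmem : f i - gramSchmidt ℝ f i ∈ span ℝ (gramSchmidt ℝ f '' Set.Iio i) := by
    rw [gramSchmidt_def ℝ f i]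
    simp_rw [starProjection_singleton, sub_sub_cancel]
    exact Submodule.sum_mem _ fun k hk => smul_mem _ _ <| subset_span <|
      Set.mem_image_of_mem _ (Finset.mem_Iio.1 hk)
  have h0 : ⟪f i - gramSchmidt ℝ f i, gramSchmidt ℝ f i⟫ = 0 := by
    refine inner_zero_of_span ?_ hmem
    rintro y ⟨i', hi', rfl⟩
    exact gramSchmidt_orthogonal ℝ f (ne_of_lt hi')
  have h1 := inner_sub_left (𝕜 := ℝ) (f i) (gramSchmidt ℝ f i) (gramSchmidt ℝ f i)
  rw [h0] at h1
  have h2 : ⟪f i, gramSchmidt ℝ f i⟫ = ⟪gramSchmidt ℝ f i, gramSchmidt ℝ f i⟫ := by linarith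
  rw [h2, real_inner_self_eq_norm_sq]

lemma glt_exists {m r : ℕ} (β : Matrix (Fin m) (Fin r) ℝ) (hβ : β.rank = r) :
    ∃ G : Matrix (Fin r) (Fin r) ℝ, G * Gᵀ = 1 ∧ IsOrderedGLT (β * G) := by
  classical
  haveI : WellFoundedLT (Fin m) := inferInstance
  set f : Fin m → EuclideanSpace ℝ (Fin r) := fun i => WithLp.toLp 2 (β i) with hf
  set g : Fin m → EuclideanSpace ℝ (Fin r) := gramSchmidtNormed ℝ f with hg
  set S : Finset (Fin m) := Finset.univ.filter (fun i => g i ≠ 0) with hS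
  have hmemS : ∀ i, i ∈ S ↔ g i ≠ 0 := by intro i; simp [hS]
  have honS : Orthonormal ℝ (fun i : {i | gramSchmidtNormed ℝ f i ≠ 0} => gramSchmidtNormed ℝ f i) :=
    gramSchmidtNormed_orthonormal' (𝕜 := ℝ) f
  have hinner : ∀ i i' : Fin m, g i ≠ 0 → g i' ≠ 0 → i ≠ i' → ⟪g i, g i'⟫ = 0 := by
    intro i i' hi hi' hne
    have := honS.2 (i := ⟨i, hi⟩) (j := ⟨i', hi'⟩) (by simpa using hne)
    exact this
  have hnorm : ∀ i : Fin m, g i ≠ 0 → ⟪g i, g i⟫ = 1 := by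
    intro i hi
    have h1 : ‖g i‖ = 1 := honS.1 ⟨i, hi⟩
    rw [real_inner_self_eq_norm_sq, h1]; norm_num
  have htop : span ℝ (Set.range f) = ⊤ := by
    have h1 : span ℝ (Set.range β.row) = ⊤ := by
      apply Submodule.eq_top_of_finrank_eq
      rw [← rank_eq_finrank_span_row, hβ]
      simp [Module.finrank_fintype_fun_eq_card]
    have hr : Set.range f = (WithLp.linearEquiv 2 ℝ (Fin r → ℝ)).symm '' Set.range β.row := by
      rw [← Set.range_comp]; rfl
    rw [hr, Submodule.span_image_linearEquiv, h1, Submodule.map_top, LinearEquiv.range]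
  have hgtop : span ℝ (g '' ↑S) = ⊤ := by
    rw [← top_le_iff, ← htop, ← span_gramSchmidt ℝ f, ← span_gramSchmidtNormed_range (𝕜 := ℝ) f, ← hg]
    rw [Submodule.span_le]
    rintro y ⟨i, rfl⟩
    by_cases h0 : g i = 0
    · rw [h0]; exact Submodule.zero_mem _
    · exact subset_span ⟨i, (hmemS i).2 h0, rfl⟩
  have hcard : S.card = r := by
    have hon' : Orthonormal ℝ (fun s : {x // x ∈ S} => g s) := by
      rw [orthonormal_iff_ite]
      intro s t
      by_cases hst : s = t
      · subst hst
        simp only [if_pos rfl]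
        exact hnorm _ ((hmemS s.1).1 s.2)
      · rw [if_neg hst]
        exact hinner _ _ ((hmemS s.1).1 s.2) ((hmemS t.1).1 t.2)
          (fun h => hst (Subtype.ext h))
    have hrange : Set.range (fun s : {x // x ∈ S} => g s) = g '' ↑S := by
      ext y; constructor
      · rintro ⟨s, rfl⟩; exact ⟨s.1, s.2, rfl⟩
      · rintro ⟨i, hi, rfl⟩; exact ⟨⟨i, hi⟩, rfl⟩
    let b : Basis {x // x ∈ S} ℝ (EuclideanSpace ℝ (Fin r)) :=
      Basis.mk hon'.linearIndependent (by rw [hrange]; exact ge_of_eq hgtop)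
    have := Module.finrank_eq_card_basis b
    rw [finrank_euclideanSpace_fin] at this
    simpa [Fintype.card_coe] using this.symm
  set l : Fin r → Fin m := fun j => S.orderEmbOfFin hcard j with hl
  have hlS : ∀ j, g (l j) ≠ 0 := fun j => (hmemS _).1 (Finset.orderEmbOfFin_mem S hcard j)
  have hlmono : StrictMono l := (S.orderEmbOfFin hcard).strictMono
  set G : Matrix (Fin r) (Fin r) ℝ := Matrix.of (fun k j => g (l j) k) with hG
  have hGG : Gᵀ * G = 1 := by
    ext j j'
    rw [Matrix.mul_apply]
    have : ∑ k, Gᵀ j k * G k j' = ⟪g (l j), g (l j')⟫ := by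
      rw [PiLp.inner_apply]
      simp [hG, Matrix.transpose_apply, mul_comm]
    rw [this]
    by_cases hjj : j = j'
    · subst hjj; rw [hnorm _ (hlS j), Matrix.one_apply_eq]
    · rw [hinner _ _ (hlS j) (hlS j') (fun h => hjj (hlmono.injective h)),
        Matrix.one_apply_ne hjj]
  have hG1 : G * Gᵀ = 1 := mul_eq_one_comm.mp hGG
  have hentry : ∀ i j, (β * G) i j = ⟪f i, g (l j)⟫ := by
    intro i j
    rw [Matrix.mul_apply, PiLp.inner_apply]
    simp [hG, hf, mul_comm]
  refine ⟨G, hG1, l, ?_, hlmono, ?_⟩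
  · -- rank
    refine le_antisymm ?_ ?_
    · exact le_trans (rank_mul_le_left β G) (le_of_eq hβ)
    · have hβeq : β * G * Gᵀ = β := by rw [Matrix.mul_assoc, hG1, Matrix.mul_one]
      calc r = β.rank := hβ.symm
        _ = (β * G * Gᵀ).rank := by rw [hβeq]
        _ ≤ (β * G).rank := rank_mul_le_left _ _
  · intro j
    constructor
    · intro i hij
      rw [hentry]
      have hfi : f i ∈ span ℝ (g '' Set.Iic i) := by
        rw [hg, span_gramSchmidtNormed (𝕜 := ℝ) f (Set.Iic i)]
        exact mem_span_gramSchmidt ℝ f le_rfl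
      refine inner_zero_of_span ?_ hfi
      rintro y ⟨i', hi', rfl⟩
      by_cases h0 : g i' = 0
      · rw [h0, inner_zero_left]
      · exact hinner _ _ h0 (hlS j) (ne_of_lt (lt_of_le_of_lt hi' hij))
    · rw [hentry]
      have hgs : gramSchmidt ℝ f (l j) ≠ 0 := by
        intro h
        apply hlS j
        rw [hg, gramSchmidtNormed, h, smul_zero]
      have : g (l j) = (‖gramSchmidt ℝ f (l j)‖ : ℝ)⁻¹ • gramSchmidt ℝ f (l j) := rfl
      rw [this, inner_smul_right, inner_self_gramSchmidt]
      have hpos : (0:ℝ) < ‖gramSchmidt ℝ f (l j)‖ := norm_pos_iff.2 hgs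
      positivity

/-- The matrix of pivot rows of an ordered GLT matrix is invertible. -/
lemma pivot_rows_isUnit {m r : ℕ} {Λ : Matrix (Fin m) (Fin r) ℝ} {l : Fin r → Fin m}
    (h : IsOrderedGLTWithPivots Λ l) :
    IsUnit (Matrix.of fun j k : Fin r => Λ (l j) k) := by
  obtain ⟨-, hmono, hpiv⟩ := h
  rw [Matrix.isUnit_iff_isUnit_det]
  have htri : (Matrix.of fun j k : Fin r => Λ (l j) k).BlockTriangular OrderDual.toDual := by
    intro j k hjk
    exact (hpiv k).1 _ (hmono hjk)
  rw [Matrix.det_of_lowerTriangular _ htri]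
  refine (Finset.prod_pos fun j _ => (hpiv j).2).ne'.isUnit

lemma pivot_le {m r : ℕ} {Λ₁ Λ₂ : Matrix (Fin m) (Fin r) ℝ} {Q : Matrix (Fin r) (Fin r) ℝ}
    {l₁ l₂ : Fin r → Fin m}
    (h₁ : IsOrderedGLTWithPivots Λ₁ l₁) (h₂ : IsOrderedGLTWithPivots Λ₂ l₂)
    (hΛ : Λ₂ = Λ₁ * Q) (j : Fin r) : l₁ j ≤ l₂ j := by
  by_contra hlt
  push_neg at hlt
  have hn : (j : ℕ) + 1 ≤ r := j.2
  set n := (j : ℕ) + 1 with hndef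
  -- the (j+1) × r matrix of rows l₂ 0, ..., l₂ j of Λ₂
  set M : Matrix (Fin n) (Fin r) ℝ := Matrix.of (fun j' k => Λ₂ (l₂ (Fin.castLE hn j')) k) with hM
  set N : Matrix (Fin n) (Fin r) ℝ := Matrix.of (fun j' k => Λ₁ (l₂ (Fin.castLE hn j')) k) with hN
  have hMrank : M.rank = n := by
    have hli : LinearIndependent ℝ (fun j' : Fin n => M j') := by
      have h2 := (Matrix.linearIndependent_rows_iff_isUnit (K := ℝ)).2 (pivot_rows_isUnit h₂)
      exact h2.comp (Fin.castLE hn) (Fin.castLE_injective hn)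
    have := hli.rank_matrix
    simpa using this
  have hMN : M = N * Q := by
    ext j' k
    rw [hM, hN, hΛ]
    simp [Matrix.mul_apply]
  -- N kills all columns k with j ≤ k
  have hNcol : ∀ (j' : Fin n) (k : Fin r), (j:ℕ) ≤ (k:ℕ) → N j' k = 0 := by
    intro j' k hk
    have h1 : l₂ (Fin.castLE hn j') ≤ l₂ j := h₂.2.1.monotone (by
      simp only [Fin.le_def, Fin.coe_castLE]
      omega)
    have h2 : l₁ j ≤ l₁ k := h₁.2.1.monotone (by simp [Fin.le_def, hk])
    exact (h₁.2.2 k).1 _ (lt_of_le_of_lt h1 (lt_of_lt_of_le hlt h2))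
  have hNrank : N.rank ≤ (j : ℕ) := by
    set N' : Matrix (Fin n) (Fin (j:ℕ)) ℝ :=
      Matrix.of (fun j' k' => N j' (Fin.castLE (le_of_lt j.2) k')) with hN'
    set E : Matrix (Fin (j:ℕ)) (Fin r) ℝ :=
      Matrix.of (fun k' k => if (Fin.castLE (le_of_lt j.2) k' : Fin r) = k then (1:ℝ) else 0)
      with hE
    have hfact : N = N' * E := by
      ext j' k
      rw [Matrix.mul_apply]
      by_cases hk : (k : ℕ) < (j : ℕ)
      · rw [Finset.sum_eq_single ⟨(k:ℕ), hk⟩]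
        · simp only [hN', hE, Matrix.of_apply]
          rw [if_pos (by ext; simp), mul_one]
          congr 1
        · intro b _ hb
          simp only [hN', hE, Matrix.of_apply]
          rw [if_neg, mul_zero]
          intro hc
          apply hb
          ext
          simpa [Fin.ext_iff] using hc
        · intro hb
          exact absurd (Finset.mem_univ _) hb
      · rw [hNcol j' k (by omega), Finset.sum_eq_zero]
        intro b _
        simp only [hN', hE, Matrix.of_apply]
        rw [if_neg, mul_zero]
        intro hc
        have : ((Fin.castLE (le_of_lt j.2) b : Fin r) : ℕ) = (k:ℕ) := by rw [hc]
        simp at this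
        omega
    calc N.rank = (N' * E).rank := by rw [hfact]
      _ ≤ N'.rank := rank_mul_le_left _ _
      _ ≤ (j:ℕ) := by simpa using N'.rank_le_card_width
  have : (n : ℕ) ≤ (j : ℕ) := by
    calc n = M.rank := hMrank.symm
      _ = (N * Q).rank := by rw [hMN]
      _ ≤ N.rank := rank_mul_le_left _ _
      _ ≤ (j:ℕ) := hNrank
  omega

lemma rot_eq_one {m r : ℕ} {Λ₁ Λ₂ : Matrix (Fin m) (Fin r) ℝ} {Q : Matrix (Fin r) (Fin r) ℝ}
    {l₁ l₂ : Fin r → Fin m}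
    (h₁ : IsOrderedGLTWithPivots Λ₁ l₁) (h₂ : IsOrderedGLTWithPivots Λ₂ l₂)
    (hQ : Q * Qᵀ = 1) (hΛ : Λ₂ = Λ₁ * Q) : Q = 1 := by
  have hQ' : Qᵀ * Q = 1 := mul_eq_one_comm.mp hQ
  have hΛ' : Λ₁ = Λ₂ * Qᵀ := by
    rw [hΛ, Matrix.mul_assoc, hQ, Matrix.mul_one]
  have hll : l₁ = l₂ := by
    funext j
    exact le_antisymm (pivot_le h₁ h₂ hΛ j) (pivot_le (Q := Qᵀ) h₂ h₁ hΛ' j)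
  subst hll
  set l := l₁ with hldef
  -- Step 2 : Q is lower triangular
  have tri : ∀ (k j : Fin r), k < j → Q k j = 0 := by
    have key : ∀ (kv : ℕ) (k : Fin r), (k : ℕ) = kv → ∀ j, k < j → Q k j = 0 := by
      intro kv
      induction kv using Nat.strong_induction_on with
      | _ kv ih =>
        intro k hk j hkj
        have h0 : Λ₂ (l k) j = 0 := (h₂.2.2 j).1 _ (h₂.2.1 hkj)
        rw [hΛ, Matrix.mul_apply] at h0
        have hsum : ∑ k', Λ₁ (l k) k' * Q k' j = Λ₁ (l k) k * Q k j := by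
          refine Finset.sum_eq_single k ?_ (fun hc => absurd (Finset.mem_univ _) hc)
          intro k' _ hne
          rcases lt_or_gt_of_ne hne with hlt | hgt
          · rw [ih (k' : ℕ) (by omega) k' rfl j (lt_trans hlt hkj), mul_zero]
          · rw [(h₁.2.2 k').1 _ (h₁.2.1 hgt), zero_mul]
        rw [hsum] at h0
        rcases mul_eq_zero.mp h0 with h | h
        · exact absurd h (ne_of_gt (h₁.2.2 k).2)
        · exact h
    exact fun k j hkj => key (k : ℕ) k rfl j hkj
  -- Step 3 : Q is diagonal with ±1 entries
  have diag : ∀ (i : Fin r), (∀ k, k ≠ i → Q i k = 0) ∧ Q i i * Q i i = 1 := by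
    have key : ∀ (iv : ℕ) (i : Fin r), (i : ℕ) = iv →
        (∀ k, k ≠ i → Q i k = 0) ∧ Q i i * Q i i = 1 := by
      intro iv
      induction iv using Nat.strong_induction_on with
      | _ iv ih =>
        intro i hi
        have hrow : ∀ k, k ≠ i → Q i k = 0 := by
          intro k hne
          rcases lt_or_gt_of_ne hne with hlt | hgt
          · -- k < i : use orthogonality with row k
            have h0 : (Q * Qᵀ) i k = 0 := by
              rw [hQ]; exact Matrix.one_apply_ne (fun h => hne.elim (h ▸ rfl))
            rw [Matrix.mul_apply] at h0
            have hsum : ∑ k', Q i k' * Qᵀ k' k = Q i k * Q k k := by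
              refine Finset.sum_eq_single k ?_ (fun hc => absurd (Finset.mem_univ _) hc)
              intro k' _ hne'
              rw [Matrix.transpose_apply,
                (ih (k : ℕ) (by omega) k rfl).1 k' hne', mul_zero]
            rw [hsum] at h0
            rcases mul_eq_zero.mp h0 with h | h
            · exact h
            · exfalso
              have := (ih (k : ℕ) (by omega) k rfl).2
              rw [h, mul_zero] at this
              exact zero_ne_one this
          · exact tri i k hgt
        refine ⟨hrow, ?_⟩
        have h1 : (Q * Qᵀ) i i = 1 := by rw [hQ]; exact Matrix.one_apply_eq i
        rw [Matrix.mul_apply] at h1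
        have hsum : ∑ k', Q i k' * Qᵀ k' i = Q i i * Q i i := by
          refine Finset.sum_eq_single i ?_ (fun hc => absurd (Finset.mem_univ _) hc)
          intro k' _ hne'
          rw [hrow k' hne', zero_mul]
        rw [hsum] at h1
        exact h1
    exact fun i => key (i : ℕ) i rfl
  -- Step 4 : positive diagonal
  have hdiag1 : ∀ j : Fin r, Q j j = 1 := by
    intro j
    have hpos2 : 0 < Λ₂ (l j) j := (h₂.2.2 j).2
    rw [hΛ, Matrix.mul_apply] at hpos2
    have hsum : ∑ k, Λ₁ (l j) k * Q k j = Λ₁ (l j) j * Q j j := by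
      refine Finset.sum_eq_single j ?_ (fun hc => absurd (Finset.mem_univ _) hc)
      intro k _ hne
      rw [(diag k).1 j (fun h => hne (h ▸ rfl)), mul_zero]
    rw [hsum] at hpos2
    nlinarith [(h₁.2.2 j).2, (diag j).2]
  ext i k
  by_cases hik : i = k
  · subst hik
    rw [hdiag1, Matrix.one_apply_eq]
  · rw [(diag i).1 k (fun h => hik (h ▸ rfl)), Matrix.one_apply_ne hik]


/-- Theorem 2(a) (rotation into GLT): every full column rank matrix `β` has a
unique representation `β = Λ Gᵀ` (equivalently `Λ = β G`) with `G` orthogonal and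
`Λ` an ordered GLT matrix, called the GLT representation of `β`. -/
theorem glt_representation_exists_unique {m r : ℕ}
    (β : Matrix (Fin m) (Fin r) ℝ) (hβ : β.rank = r) :
    ∃! ΛG : Matrix (Fin m) (Fin r) ℝ × Matrix (Fin r) (Fin r) ℝ,
      ΛG.2 * ΛG.2ᵀ = 1 ∧ ΛG.1 = β * ΛG.2 ∧ IsOrderedGLT ΛG.1 := by
  obtain ⟨G, hG1, hGLT⟩ := glt_exists β hβ
  refine ⟨(β * G, G), ⟨hG1, rfl, hGLT⟩, ?_⟩
  rintro ⟨Λ', G'⟩ ⟨hO', hEq', hGLT'⟩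
  obtain ⟨l₁, h₁⟩ := hGLT
  obtain ⟨l₂, h₂⟩ := hGLT'
  simp only at hO' hEq' h₂ ⊢
  have hGG : Gᵀ * G = 1 := mul_eq_one_comm.mp hG1
  set Q : Matrix (Fin r) (Fin r) ℝ := Gᵀ * G' with hQdef
  have hQ : Q * Qᵀ = 1 := by
    rw [hQdef, Matrix.transpose_mul, Matrix.transpose_transpose, Matrix.mul_assoc,
      ← Matrix.mul_assoc G', hO', Matrix.one_mul, hGG]
  have hΛ : Λ' = (β * G) * Q := by
    rw [hEq', hQdef, Matrix.mul_assoc, ← Matrix.mul_assoc G, hG1, Matrix.one_mul]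
  have hQ1 : Q = 1 := rot_eq_one h₁ h₂ hQ hΛ
  have hG'G : G' = G := by
    have : G * Q = G * 1 := by rw [hQ1]
    rw [hQdef, ← Matrix.mul_assoc, hG1, Matrix.one_mul, Matrix.mul_one] at this
    exact this
  rw [Prod.ext_iff]
  constructor
  · simp only
    rw [hEq', hG'G]
  · simp only
    exact hG'G
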